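/- Let K ∈ ℝ^{n×n} be a symmetric positive semidefinite matrix and partition coordinates of ℝⁿ into m blocks. Define ρ_min(η) = η · sup{ αᵀKα / Σᵢ₌₁ᵐ α_[i]ᵀ K α_[i] : α ∈ ℝⁿ, Σᵢ α_[i]ᵀKα_[i] > 0 }. Then for any ρ ≥ ρ_min(η), any α ∈ ℝⁿ, and any block vectors Δα_[i] supported on the blocks, the quadratic form satisfies (α + η Σᵢ Δα_[i])ᵀ K (α + η Σᵢ Δα_[i]) ≤ αᵀKα + 2η Σᵢ Δα_[i]ᵀ K α + η ρ Σᵢ Δα_[i]ᵀ K Δα_[i]. -/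

import Mathlib

open Matrix

/-- Restriction of a vector to block `i` (block membership given by `B`). -/
def blockRestrict {n m : ℕ} (B : Fin n → Fin m) (x : Fin n → ℝ) (i : Fin m) :
    Fin n → ℝ :=
  fun j => if B j = i then x j else 0

lemma qsymm {n : ℕ} {K : Matrix (Fin n) (Fin n) ℝ} (hK : K.PosSemidef)
    (x y : Fin n → ℝ) : x ⬝ᵥ K.mulVec y = y ⬝ᵥ K.mulVec x := by
  rw [dotProduct_mulVec, ← mulVec_transpose]
  rw [show Kᵀ = K from hK.1.eq]
  rw [dotProduct_comm]

lemma qnonneg {n : ℕ} {K : Matrix (Fin n) (Fin n) ℝ} (hK : K.PosSemidef)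
    (x : Fin n → ℝ) : 0 ≤ x ⬝ᵥ K.mulVec x := by
  have h := hK.dotProduct_mulVec_nonneg x; rwa [star_trivial] at h

lemma two_bilin_le {n : ℕ} {K : Matrix (Fin n) (Fin n) ℝ} (hK : K.PosSemidef)
    (x y : Fin n → ℝ) :
    2 * (x ⬝ᵥ K.mulVec y) ≤ x ⬝ᵥ K.mulVec x + y ⬝ᵥ K.mulVec y := by
  have h := qnonneg hK (x - y)
  have e : (x - y) ⬝ᵥ K.mulVec (x - y) =
      x ⬝ᵥ K.mulVec x - 2 * (x ⬝ᵥ K.mulVec y) + y ⬝ᵥ K.mulVec y := by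
    rw [mulVec_sub, sub_dotProduct, dotProduct_sub, dotProduct_sub, qsymm hK y x]
    ring
  rw [e] at h; linarith

lemma mulVec_sum' {n m : ℕ} (K : Matrix (Fin n) (Fin n) ℝ) (x : Fin m → Fin n → ℝ) :
    K.mulVec (∑ i, x i) = ∑ i, K.mulVec (x i) := by
  ext k
  simp [mulVec, dotProduct, Finset.sum_apply, Finset.mul_sum]
  rw [Finset.sum_comm]

lemma dot_sum_left {n m : ℕ} (v : Fin n → ℝ) (x : Fin m → Fin n → ℝ) :
    (∑ i, x i) ⬝ᵥ v = ∑ i, x i ⬝ᵥ v := by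
  simp [dotProduct, Finset.sum_apply, Finset.sum_mul]
  rw [Finset.sum_comm]

lemma dot_sum_right {n m : ℕ} (v : Fin n → ℝ) (x : Fin m → Fin n → ℝ) :
    v ⬝ᵥ (∑ i, x i) = ∑ i, v ⬝ᵥ x i := by
  simp [dotProduct, Finset.sum_apply, Finset.mul_sum]
  rw [Finset.sum_comm]

lemma sum_quad_le {n m : ℕ} {K : Matrix (Fin n) (Fin n) ℝ} (hK : K.PosSemidef)
    (x : Fin m → Fin n → ℝ) :
    (∑ i, x i) ⬝ᵥ K.mulVec (∑ i, x i) ≤ m * ∑ i, x i ⬝ᵥ K.mulVec (x i) := by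
  have expand : (∑ i, x i) ⬝ᵥ K.mulVec (∑ i, x i) =
      ∑ i, ∑ j, x i ⬝ᵥ K.mulVec (x j) := by
    rw [mulVec_sum', dot_sum_left]
    exact Finset.sum_congr rfl fun i _ => by rw [dot_sum_right]
  rw [expand]
  have e2 : ∑ i : Fin m, ∑ j : Fin m,
      (x i ⬝ᵥ K.mulVec (x i) + x j ⬝ᵥ K.mulVec (x j)) =
      2 * ((m : ℝ) * ∑ i, x i ⬝ᵥ K.mulVec (x i)) := by
    simp [Finset.sum_add_distrib, Finset.sum_const, Finset.mul_sum]
    rw [← Finset.sum_add_distrib]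
    exact Finset.sum_congr rfl fun _ _ => by ring
  have hle : ∑ i : Fin m, ∑ j : Fin m, (2 * (x i ⬝ᵥ K.mulVec (x j))) ≤
      ∑ i : Fin m, ∑ j : Fin m,
      (x i ⬝ᵥ K.mulVec (x i) + x j ⬝ᵥ K.mulVec (x j)) := by
    apply Finset.sum_le_sum; intro i _; apply Finset.sum_le_sum; intro j _
    exact two_bilin_le hK (x i) (x j)
  rw [e2] at hle
  have h3 : ∑ i : Fin m, ∑ j : Fin m, (2 * (x i ⬝ᵥ K.mulVec (x j))) =
      2 * ∑ i : Fin m, ∑ j : Fin m, x i ⬝ᵥ K.mulVec (x j) := by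
    simp [Finset.mul_sum]
  rw [h3] at hle
  linarith

lemma sum_blockRestrict {n m : ℕ} (B : Fin n → Fin m) (x : Fin n → ℝ) :
    ∑ i, blockRestrict B x i = x := by
  ext j
  simp [blockRestrict, Finset.sum_apply, Finset.sum_ite_eq]

theorem quadratic_block_separation
    (n m : ℕ) (B : Fin n → Fin m) (K : Matrix (Fin n) (Fin n) ℝ)
    (hK : K.PosSemidef) (η : ℝ) (hη : η ∈ Set.Icc (0 : ℝ) 1)
    (ρ : ℝ)
    (hρ : ρ ≥ η * sSup {r : ℝ | ∃ α : Fin n → ℝ,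
        0 < ∑ i, blockRestrict B α i ⬝ᵥ K.mulVec (blockRestrict B α i) ∧
        r = (α ⬝ᵥ K.mulVec α) /
          ∑ i, blockRestrict B α i ⬝ᵥ K.mulVec (blockRestrict B α i)})
    (α : Fin n → ℝ) (Δ : Fin m → Fin n → ℝ)
    (hsupp : ∀ i j, B j ≠ i → Δ i j = 0) :
    (α + η • ∑ i, Δ i) ⬝ᵥ K.mulVec (α + η • ∑ i, Δ i) ≤
      α ⬝ᵥ K.mulVec α + 2 * η * ∑ i, Δ i ⬝ᵥ K.mulVec α +
        η * ρ * ∑ i, Δ i ⬝ᵥ K.mulVec (Δ i) := by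
  set d : Fin n → ℝ := ∑ i, Δ i with hd
  set s : ℝ := ∑ i, Δ i ⬝ᵥ K.mulVec (Δ i) with hs
  have hbr : ∀ i, blockRestrict B d i = Δ i := by
    intro i; ext j
    by_cases h : B j = i
    · simp only [blockRestrict, h, if_true, hd, Finset.sum_apply]
      exact Finset.sum_eq_single i (fun k _ hk => hsupp k j (by rw [h]; exact fun e => hk e.symm)) (by simp)
    · simp [blockRestrict, h, hsupp i j h]
  -- expansion
  have expand : (α + η • d) ⬝ᵥ K.mulVec (α + η • d) =
      α ⬝ᵥ K.mulVec α + 2 * η * (d ⬝ᵥ K.mulVec α) + η * η * (d ⬝ᵥ K.mulVec d) := by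
    rw [mulVec_add, mulVec_smul, add_dotProduct, smul_dotProduct, dotProduct_add,
      dotProduct_add, dotProduct_smul, dotProduct_smul, qsymm hK α d]
    simp [smul_eq_mul]; ring
  have hdsum : ∑ i, Δ i ⬝ᵥ K.mulVec α = d ⬝ᵥ K.mulVec α := (dot_sum_left _ _).symm
  rw [expand, hdsum]
  have hsnn : 0 ≤ s := Finset.sum_nonneg fun i _ => qnonneg hK (Δ i)
  have key : η * η * (d ⬝ᵥ K.mulVec d) ≤ η * ρ * s := by
    rcases eq_or_lt_of_le hsnn with h0 | hpos
    · -- s = 0, so dKd = 0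
      have hdd : d ⬝ᵥ K.mulVec d ≤ 0 := by
        have := sum_quad_le hK Δ
        rw [← hd, ← hs, ← h0] at this
        simpa using this
      have hdd0 : d ⬝ᵥ K.mulVec d = 0 := le_antisymm hdd (qnonneg hK d)
      rw [hdd0, ← h0]; simp
    · -- s > 0
      set S := {r : ℝ | ∃ β : Fin n → ℝ,
        0 < ∑ i, blockRestrict B β i ⬝ᵥ K.mulVec (blockRestrict B β i) ∧
        r = (β ⬝ᵥ K.mulVec β) /
          ∑ i, blockRestrict B β i ⬝ᵥ K.mulVec (blockRestrict B β i)} with hS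
      have hmem : (d ⬝ᵥ K.mulVec d) / s ∈ S := by
        refine ⟨d, ?_, ?_⟩
        · simp only [hbr]; exact hpos
        · simp only [hbr, hs]
      have hbdd : BddAbove S := by
        refine ⟨m, ?_⟩
        rintro r ⟨β, hq, rfl⟩
        rw [div_le_iff₀ hq]
        have := sum_quad_le hK (blockRestrict B β)
        rw [sum_blockRestrict] at this; linarith
      have h1 : (d ⬝ᵥ K.mulVec d) / s ≤ sSup S := le_csSup hbdd hmem
      have h2 : η * ((d ⬝ᵥ K.mulVec d) / s) ≤ ρ :=
        le_trans (mul_le_mul_of_nonneg_left h1 hη.1) hρ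
      have h3 := mul_le_mul_of_nonneg_right h2 (mul_nonneg hη.1 hsnn)
      calc η * η * (d ⬝ᵥ K.mulVec d) = η * ((d ⬝ᵥ K.mulVec d) / s) * (η * s) := by
            field_simp
        _ ≤ ρ * (η * s) := h3
        _ = η * ρ * s := by ring
  linarith
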